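/- Let x ∈ B(H) with numerical range contained in the sector S_ρ = {re^{iθ} : r ≥ 0, |θ| ≤ ρ} for some ρ < π/2. Write x = a + ib with a = Re(x) ≥ 0 and b = Im(x) selfadjoint. Then x*x ≤ ‖a‖ sec²(ρ) · a; that is, x/‖Re(x)‖ ∈ (sec²ρ/2)·𝔉_{B(H)}. -/

import Mathlib

open Real ContinuousLinearMap

section SectorAux

private lemma sector_aux {ρ : ℝ} (hρ0 : 0 ≤ ρ) (hρ : ρ < π / 2) {z : ℂ}
    (h : z = 0 ∨ |Complex.arg z| ≤ ρ) :
    0 ≤ z.re ∧ |z.im| ≤ Real.tan ρ * z.re := by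
  rcases eq_or_ne z 0 with rfl | hz
  · simp
  rcases h with h | h
  · exact absurd h hz
  have hπ := Real.pi_pos
  have harg : |Complex.arg z| < π / 2 := h.trans_lt hρ
  have hre : 0 < z.re := by
    rcases Complex.abs_arg_lt_pi_div_two_iff.mp harg with h' | h'
    · exact h'
    · exact absurd h' hz
  refine ⟨hre.le, ?_⟩
  have h1 : Real.tan |Complex.arg z| ≤ Real.tan ρ := by
    rcases eq_or_lt_of_le h with h' | h'
    · rw [h']
    · exact (Real.tan_lt_tan_of_nonneg_of_lt_pi_div_two (abs_nonneg _) hρ h').le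
  have h2 : |Real.tan (Complex.arg z)| = Real.tan |Complex.arg z| := by
    rcases abs_cases (Complex.arg z) with ⟨he, hs⟩ | ⟨he, hs⟩
    · rw [he, abs_of_nonneg]
      exact Real.tan_nonneg_of_nonneg_of_le_pi_div_two hs (by linarith [abs_lt.mp harg])
    · rw [he, Real.tan_neg, abs_of_nonpos]
      have h4 : -(π/2) < Complex.arg z := by
        have h5 := abs_lt.mp harg; linarith [h5.1]
      exact Real.tan_nonpos_of_nonpos_of_neg_pi_div_two_le hs.le (by linarith)
  have h3 : Real.tan (Complex.arg z) = z.im / z.re := Complex.tan_arg z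
  calc |z.im| = |z.im / z.re| * z.re := by
        rw [abs_div, abs_of_pos hre]
        field_simp
    _ ≤ Real.tan ρ * z.re := by
        apply mul_le_mul_of_nonneg_right _ hre.le
        rw [← h3, h2]; exact h1

set_option maxHeartbeats 2000000 in
set_option synthInstance.maxHeartbeats 400000 in
private theorem key_quadratic_bound {H : Type*} [NormedAddCommGroup H] [InnerProductSpace ℂ H]
    [CompleteSpace H] [Nontrivial H] (x a b : H →L[ℂ] H) (t : ℝ) (ht0 : 0 ≤ t)
    (ha_sa : IsSelfAdjoint a) (hb_sa : IsSelfAdjoint b)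
    (hxab : x = a + Complex.I • b)
    (hinner_a : ∀ w : H, (inner ℂ (a w) w : ℂ) = (((inner ℂ (x w) w : ℂ).re : ℝ) : ℂ))
    (hinner_b : ∀ w : H, (inner ℂ (b w) w : ℂ) = ((-(inner ℂ (x w) w : ℂ).im : ℝ) : ℂ))
    (hform : ∀ w : H, 0 ≤ (inner ℂ (x w) w : ℂ).re ∧
      |(inner ℂ (x w) w : ℂ).im| ≤ t * (inner ℂ (x w) w : ℂ).re)
    (ξ : H) :
    ‖x ξ‖ ^ 2 ≤ ‖a‖ * ((1 + t ^ 2) * (inner ℂ (x ξ) ξ : ℂ).re) := by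
  have hips : ∀ w : H, (inner ℂ w w : ℂ) = ((‖w‖ ^ 2 : ℝ) : ℂ) := fun w => by
    rw [inner_self_eq_norm_sq_to_K]; norm_cast
  set M := ‖a‖ with hM_def
  have hM0 : 0 ≤ M := norm_nonneg a
  set A := (inner ℂ (x ξ) ξ : ℂ).re with hA_def
  have hA0 : 0 ≤ A := (hform ξ).1
  have ha_nonneg : (0 : H →L[ℂ] H) ≤ a := by
    rw [ContinuousLinearMap.le_def, sub_zero]
    refine ⟨ContinuousLinearMap.isSelfAdjoint_iff_isSymmetric.mp ha_sa, fun w => ?_⟩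
    rw [reApplyInnerSelf_apply, show (inner ℂ (a w) w : ℂ) = _ from hinner_a w]
    simpa using (hform w).1
  have main : ∀ ε : ℝ, 0 < ε →
      ‖x ξ‖ ≤ Real.sqrt ((M + ε) * ((1 + t ^ 2) * (A + ε * ‖ξ‖ ^ 2))) + ε * ‖ξ‖ := by
    intro ε hε
    set aε := a + algebraMap ℝ (H →L[ℂ] H) ε with haε_def
    have halg_apply : ∀ (r : ℝ) (w : H), (algebraMap ℝ (H →L[ℂ] H) r) w = (r : ℂ) • w := by
      intro r w
      rw [Algebra.algebraMap_eq_smul_one, ContinuousLinearMap.smul_apply,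
        ContinuousLinearMap.one_apply, ← Complex.coe_smul]
    have halg_sa : ∀ r : ℝ, IsSelfAdjoint (algebraMap ℝ (H →L[ℂ] H) r) := by
      intro r
      rw [Algebra.algebraMap_eq_smul_one]
      exact IsSelfAdjoint.smul (star_trivial r) (IsSelfAdjoint.one _)
    have halg_nonneg : (0 : H →L[ℂ] H) ≤ algebraMap ℝ (H →L[ℂ] H) ε := by
      rw [ContinuousLinearMap.le_def, sub_zero]
      refine ⟨ContinuousLinearMap.isSelfAdjoint_iff_isSymmetric.mp (halg_sa ε), fun w => ?_⟩
      rw [reApplyInnerSelf_apply, halg_apply, inner_smul_left, Complex.conj_ofReal, hips]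
      rw [show ((ε:ℂ) * ((‖w‖^2 : ℝ):ℂ)) = (((ε * ‖w‖^2 : ℝ)):ℂ) by push_cast; ring]
      rw [RCLike.re_to_complex, Complex.ofReal_re]
      positivity
    have haε_nonneg : (0 : H →L[ℂ] H) ≤ aε := add_nonneg ha_nonneg halg_nonneg
    have hinner_aε : ∀ w : H, ((inner ℂ (aε w) w : ℂ)).re
        = (inner ℂ (x w) w : ℂ).re + ε * ‖w‖ ^ 2 := by
      intro w
      rw [haε_def, ContinuousLinearMap.add_apply, inner_add_left, halg_apply,
        inner_smul_left, Complex.conj_ofReal, hinner_a w, hips]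
      rw [show ((ε:ℂ) * ((‖w‖^2 : ℝ):ℂ)) = (((ε * ‖w‖^2 : ℝ)):ℂ) by push_cast; ring]
      rw [Complex.add_re, Complex.ofReal_re, Complex.ofReal_re]
    have hMε : ‖aε‖ ≤ M + ε := by
      refine (norm_add_le _ _).trans ?_
      have h1 : ‖algebraMap ℝ (H →L[ℂ] H) ε‖ = ε := by
        rw [Algebra.algebraMap_eq_smul_one, norm_smul, ContinuousLinearMap.one_def,
          ContinuousLinearMap.norm_id, Real.norm_eq_abs, abs_of_pos hε, mul_one]
      rw [h1]
    have hunit : IsUnit aε := by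
      refine CStarAlgebra.isUnit_of_le (algebraMap ℝ (H →L[ℂ] H) ε) ?_ ⟨halg_nonneg, IsUnit.map (algebraMap ℝ (H →L[ℂ] H))
        (isUnit_iff_ne_zero.mpr hε.ne')⟩
      rw [haε_def]
      exact le_add_of_nonneg_left ha_nonneg
    obtain ⟨s, hs_sa, hss, u, hsu, hus, hu_sa⟩ :
        ∃ s : H →L[ℂ] H, IsSelfAdjoint s ∧ s * s = aε ∧
          ∃ u : H →L[ℂ] H, s * u = 1 ∧ u * s = 1 ∧ IsSelfAdjoint u := by
      refine ⟨CFC.sqrt aε, .of_nonneg (CFC.sqrt_nonneg _), CFC.sqrt_mul_sqrt_self aε haε_nonneg, ?_⟩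
      set s₀ := CFC.sqrt aε with hs₀
      have hs₀_sa : IsSelfAdjoint s₀ := .of_nonneg (CFC.sqrt_nonneg _)
      have hss₀ : s₀ * s₀ = aε := CFC.sqrt_mul_sqrt_self aε haε_nonneg
      obtain ⟨U, hU⟩ := hunit
      have hv1 : aε * ↑U⁻¹ = 1 := by rw [← hU]; exact U.mul_inv
      have hv2 : (↑U⁻¹ : H →L[ℂ] H) * aε = 1 := by rw [← hU]; exact U.inv_mul
      have hsr : s₀ * (s₀ * ↑U⁻¹) = 1 := by rw [← mul_assoc, hss₀, hv1]
      have hsl : ((↑U⁻¹ : H →L[ℂ] H) * s₀) * s₀ = 1 := by rw [mul_assoc, hss₀, hv2]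
      have hcomm : (↑U⁻¹ : H →L[ℂ] H) * s₀ = s₀ * ↑U⁻¹ := by
        calc (↑U⁻¹ : H →L[ℂ] H) * s₀
            = ((↑U⁻¹ : H →L[ℂ] H) * s₀) * (s₀ * (s₀ * ↑U⁻¹)) := by rw [hsr, mul_one]
          _ = (((↑U⁻¹ : H →L[ℂ] H) * s₀) * s₀) * (s₀ * ↑U⁻¹) := by simp only [mul_assoc]
          _ = s₀ * ↑U⁻¹ := by rw [hsl, one_mul]
      have hus' : (s₀ * ↑U⁻¹) * s₀ = 1 := by rw [← hcomm]; exact hsl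
      refine ⟨s₀ * ↑U⁻¹, hsr, hus', ?_⟩
      have h1 : star (s₀ * ↑U⁻¹) * s₀ = 1 := by
        nth_rewrite 2 [← hs₀_sa.star_eq]
        rw [← star_mul, hsr, star_one]
      calc star (s₀ * ↑U⁻¹) = star (s₀ * ↑U⁻¹) * (s₀ * (s₀ * ↑U⁻¹)) := by rw [hsr, mul_one]
        _ = (star (s₀ * ↑U⁻¹) * s₀) * (s₀ * ↑U⁻¹) := by simp only [mul_assoc]
        _ = s₀ * ↑U⁻¹ := by rw [h1, one_mul]
    have hadj_u : adjoint u = u := by rw [← star_eq_adjoint, hu_sa.star_eq]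
    have hadj_s : adjoint s = s := by rw [← star_eq_adjoint, hs_sa.star_eq]
    have hsw : ∀ w : H, ((inner ℂ (aε w) w : ℂ)).re = ‖s w‖ ^ 2 := by
      intro w
      have h1 : aε w = s (s w) := by rw [← hss]; rfl
      rw [h1]
      nth_rewrite 1 [← hadj_s]
      rw [adjoint_inner_left, hips, Complex.ofReal_re]
    obtain ⟨c, hc_sa, hscs, hcnorm⟩ :
        ∃ c : H →L[ℂ] H, IsSelfAdjoint c ∧ s * c * s = b ∧ ∀ ζ : H, ‖c ζ‖ ≤ t * ‖ζ‖ := by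
      have hcsa : IsSelfAdjoint (u * b * u) := hb_sa.conjugate_self hu_sa
      refine ⟨u * b * u, hcsa, ?_, ?_⟩
      · rw [show s * (u * b * u) * s = (s * u) * b * (u * s) by simp only [mul_assoc],
          hsu, hus, one_mul, mul_one]
      · have hcform : ∀ w : H, |(inner ℂ ((u * b * u) w) w : ℂ).re| ≤ t * ‖w‖ ^ 2 := by
          intro w
          have h2 : (inner ℂ ((u * b * u) w) w : ℂ) = inner ℂ (b (u w)) (u w) := by
            have h1 : (u * b * u) w = u (b (u w)) := rfl
            rw [h1]
            nth_rewrite 1 [← hadj_u]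
            rw [adjoint_inner_left]
          have h4 := (hform (u w)).2
          have h5 : (inner ℂ (x (u w)) (u w) : ℂ).re + ε * ‖u w‖ ^ 2 = ‖s (u w)‖ ^ 2 := by
            rw [← hinner_aε, hsw]
          have h6 : s (u w) = w := by
            have h7 : s (u w) = (s * u) w := rfl
            rw [h7, hsu, ContinuousLinearMap.one_apply]
          rw [h6] at h5
          rw [h2, hinner_b, show ((-(inner ℂ (x (u w)) (u w) : ℂ).im : ℝ) : ℂ).re
            = -(inner ℂ (x (u w)) (u w) : ℂ).im by simp, abs_neg]
          refine h4.trans (mul_le_mul_of_nonneg_left ?_ ht0)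
          nlinarith [sq_nonneg ‖u w‖, (hform (u w)).1, hε.le]
        have hcle : (u * b * u) ≤ algebraMap ℝ (H →L[ℂ] H) t := by
          rw [ContinuousLinearMap.le_def]
          refine ⟨ContinuousLinearMap.isSelfAdjoint_iff_isSymmetric.mp ((halg_sa t).sub hcsa), fun w => ?_⟩
          rw [reApplyInnerSelf_apply, ContinuousLinearMap.sub_apply, inner_sub_left,
            halg_apply, inner_smul_left, Complex.conj_ofReal, hips]
          rw [show ((t:ℂ) * ((‖w‖^2 : ℝ):ℂ)) = (((t * ‖w‖^2 : ℝ)):ℂ) by push_cast; ring]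
          rw [RCLike.re_to_complex, Complex.sub_re, Complex.ofReal_re]
          have h3 := abs_le.mp (hcform w)
          linarith [h3.2]
        have hcge : algebraMap ℝ (H →L[ℂ] H) (-t) ≤ (u * b * u) := by
          rw [ContinuousLinearMap.le_def]
          refine ⟨ContinuousLinearMap.isSelfAdjoint_iff_isSymmetric.mp (hcsa.sub (halg_sa (-t))), fun w => ?_⟩
          rw [reApplyInnerSelf_apply, ContinuousLinearMap.sub_apply, inner_sub_left,
            halg_apply, inner_smul_left, Complex.conj_ofReal, hips]
          rw [show (((-t:ℝ):ℂ) * ((‖w‖^2 : ℝ):ℂ)) = ((((-t) * ‖w‖^2 : ℝ)):ℂ) by push_cast; ring]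
          rw [RCLike.re_to_complex, Complex.sub_re, Complex.ofReal_re]
          have h3 := abs_le.mp (hcform w)
          linarith [h3.1]
        have hspec1 := (le_algebraMap_iff_spectrum_le (a := u * b * u) (r := t) hcsa).mp hcle
        have hspec2 := (algebraMap_le_iff_le_spectrum (a := u * b * u) (r := -t) hcsa).mp hcge
        intro ζ
        have hnorm : ‖u * b * u‖ ≤ t := by
          conv_lhs => rw [← cfc_id ℝ (u * b * u) hcsa]
          refine norm_cfc_le ht0 fun r hr => ?_
          rw [id_eq, Real.norm_eq_abs]
          exact abs_le.mpr ⟨hspec2 r hr, hspec1 r hr⟩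
        calc ‖(u * b * u) ζ‖ ≤ ‖u * b * u‖ * ‖ζ‖ := le_opNorm _ _
          _ ≤ t * ‖ζ‖ := mul_le_mul_of_nonneg_right hnorm (norm_nonneg ζ)
    have hadj_c : adjoint c = c := by rw [← star_eq_adjoint, hc_sa.star_eq]
    -- operator identity
    have hop : x = s * (1 + Complex.I • c) * s - algebraMap ℝ (H →L[ℂ] H) ε := by
      have h1 : s * (1 + Complex.I • c) * s = aε + Complex.I • b := by
        rw [mul_add, mul_one, add_mul, hss, mul_smul_comm, smul_mul_assoc, hscs]
      rw [h1, hxab, haε_def]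
      abel
    have hxξ : x ξ = s ((1 + Complex.I • c) (s ξ)) - (ε : ℂ) • ξ := by
      have h1 := congrArg (fun f : H →L[ℂ] H => f ξ) hop
      simpa [ContinuousLinearMap.sub_apply, halg_apply, ContinuousLinearMap.mul_apply] using h1
    have hb1 : ‖x ξ‖ ≤ ‖s‖ * ‖(1 + Complex.I • c) (s ξ)‖ + ε * ‖ξ‖ := by
      rw [hxξ]
      refine (norm_sub_le _ _).trans ?_
      have h2 : ‖(ε:ℂ) • ξ‖ = ε * ‖ξ‖ := by
        rw [norm_smul, Complex.norm_real, Real.norm_eq_abs, abs_of_pos hε]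
      rw [h2]
      exact add_le_add (le_opNorm s _) le_rfl
    have hw2sq : ‖(1 + Complex.I • c) (s ξ)‖ ^ 2 = ‖s ξ‖ ^ 2 + ‖c (s ξ)‖ ^ 2 := by
      have h1 : (1 + Complex.I • c) (s ξ) = s ξ + Complex.I • (c (s ξ)) := by
        rw [ContinuousLinearMap.add_apply, ContinuousLinearMap.one_apply,
          ContinuousLinearMap.smul_apply]
      have hzsym : (inner ℂ (c (s ξ)) (s ξ) : ℂ) = inner ℂ (s ξ) (c (s ξ)) := by
        nth_rewrite 1 [← hadj_c]
        rw [adjoint_inner_left]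
      have hzim : (inner ℂ (s ξ) (c (s ξ)) : ℂ).im = 0 := by
        have h3 : (inner ℂ (s ξ) (c (s ξ)) : ℂ) = (starRingEnd ℂ) (inner ℂ (s ξ) (c (s ξ)) : ℂ) := by
          rw [inner_conj_symm, hzsym]
        exact Complex.conj_eq_iff_im.mp h3.symm
      have hre0 : RCLike.re (inner ℂ (s ξ) (Complex.I • (c (s ξ))) : ℂ) = 0 := by
        rw [inner_smul_right, RCLike.re_to_complex, Complex.mul_re, Complex.I_re, Complex.I_im,
          hzim]
        ring
      rw [h1, norm_add_sq (𝕜 := ℂ), hre0, norm_smul, Complex.norm_I, one_mul]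
      ring
    have hvsq : ‖s ξ‖ ^ 2 = A + ε * ‖ξ‖ ^ 2 := by
      rw [← hsw ξ, hinner_aε ξ, hA_def]
    have hssq : ‖s‖ ^ 2 ≤ M + ε := by
      calc ‖s‖ ^ 2 = ‖star s * s‖ := by rw [CStarRing.norm_star_mul_self, sq]
        _ = ‖aε‖ := by rw [hs_sa.star_eq, hss]
        _ ≤ M + ε := hMε
    have hw2b : ‖(1 + Complex.I • c) (s ξ)‖ ^ 2 ≤ (1 + t ^ 2) * (A + ε * ‖ξ‖ ^ 2) := by
      have h1 := hcnorm (s ξ)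
      have h2 : ‖c (s ξ)‖ ^ 2 ≤ t ^ 2 * ‖s ξ‖ ^ 2 := by
        nlinarith [norm_nonneg (c (s ξ)), norm_nonneg (s ξ)]
      rw [hw2sq]
      nlinarith [hvsq]
    have h11 : ‖s‖ * ‖(1 + Complex.I • c) (s ξ)‖
        ≤ Real.sqrt ((M + ε) * ((1 + t ^ 2) * (A + ε * ‖ξ‖ ^ 2))) := by
      have h12 : (‖s‖ * ‖(1 + Complex.I • c) (s ξ)‖) ^ 2
          ≤ (M + ε) * ((1 + t ^ 2) * (A + ε * ‖ξ‖ ^ 2)) := by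
        rw [mul_pow]
        exact mul_le_mul hssq hw2b (sq_nonneg _) (by linarith)
      calc ‖s‖ * ‖(1 + Complex.I • c) (s ξ)‖
          = Real.sqrt ((‖s‖ * ‖(1 + Complex.I • c) (s ξ)‖) ^ 2) := by
            rw [Real.sqrt_sq (by positivity)]
        _ ≤ _ := Real.sqrt_le_sqrt h12
    exact hb1.trans (add_le_add h11 le_rfl)
  -- take the limit ε → 0⁺
  have hcont : Continuous (fun ε : ℝ =>
      Real.sqrt ((M + ε) * ((1 + t ^ 2) * (A + ε * ‖ξ‖ ^ 2))) + ε * ‖ξ‖) := by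
    fun_prop
  have hlim : Filter.Tendsto (fun ε : ℝ =>
      Real.sqrt ((M + ε) * ((1 + t ^ 2) * (A + ε * ‖ξ‖ ^ 2))) + ε * ‖ξ‖)
      (nhdsWithin 0 (Set.Ioi 0)) (nhds (Real.sqrt (M * ((1 + t ^ 2) * A)))) := by
    have h1 := (hcont.tendsto 0).mono_left (nhdsWithin_le_nhds : nhdsWithin (0:ℝ) (Set.Ioi 0) ≤ nhds 0)
    simpa using h1
  have hev : ∀ᶠ ε in nhdsWithin (0:ℝ) (Set.Ioi 0),
      ‖x ξ‖ ≤ Real.sqrt ((M + ε) * ((1 + t ^ 2) * (A + ε * ‖ξ‖ ^ 2))) + ε * ‖ξ‖ := by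
    filter_upwards [self_mem_nhdsWithin] with ε hε
    exact main ε hε
  have h0 : ‖x ξ‖ ≤ Real.sqrt (M * ((1 + t ^ 2) * A)) := ge_of_tendsto hlim hev
  have h13 := pow_le_pow_left₀ (norm_nonneg (x ξ)) h0 2
  rwa [Real.sq_sqrt (mul_nonneg hM0 (mul_nonneg (by positivity) hA0))] at h13
end SectorAux

set_option maxHeartbeats 1000000 in
set_option synthInstance.maxHeartbeats 400000 in
/-- If the numerical range of `x ∈ B(H)` lies in the sector `S_ρ` with `ρ < π/2`, and
`a = Re(x)`, then `x*x ≤ ‖a‖ sec²(ρ) · a`; i.e. `x/‖Re x‖ ∈ (sec²ρ/2)𝔉_{B(H)}`. -/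
theorem stmt6 {H : Type*} [NormedAddCommGroup H] [InnerProductSpace ℂ H] [CompleteSpace H]
    (x : H →L[ℂ] H) (ρ : ℝ) (hρ0 : 0 ≤ ρ) (hρ : ρ < π / 2)
    (hsec : ∀ ξ : H, ‖ξ‖ = 1 →
      (inner ℂ (x ξ) ξ : ℂ) = 0 ∨ |Complex.arg (inner ℂ (x ξ) ξ : ℂ)| ≤ ρ) :
    ((‖(2 : ℂ)⁻¹ • (x + adjoint x)‖ * (1 / Real.cos ρ) ^ 2) •
        ((2 : ℂ)⁻¹ • (x + adjoint x)) - adjoint x * x).IsPositive := by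
  rcases subsingleton_or_nontrivial H with hH | hH
  · have h0 : ((‖(2 : ℂ)⁻¹ • (x + adjoint x)‖ * (1 / Real.cos ρ) ^ 2) •
        ((2 : ℂ)⁻¹ • (x + adjoint x)) - adjoint x * x) = 0 := by
      ext ξ; exact Subsingleton.elim _ _
    rw [h0]; exact isPositive_zero
  have hπ := Real.pi_pos
  have hips : ∀ w : H, (inner ℂ w w : ℂ) = ((‖w‖ ^ 2 : ℝ) : ℂ) := fun w => by
    rw [inner_self_eq_norm_sq_to_K]; norm_cast
  set t := Real.tan ρ with ht_def
  have ht0 : 0 ≤ t := Real.tan_nonneg_of_nonneg_of_le_pi_div_two hρ0 hρ.le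
  have hcos : 0 < Real.cos ρ := Real.cos_pos_of_mem_Ioo ⟨by linarith, hρ⟩
  have hsec2 : (1 / Real.cos ρ) ^ 2 = 1 + t ^ 2 := by
    rw [div_pow, one_pow, one_div, ← Real.inv_one_add_tan_sq hcos.ne', inv_inv, ht_def]
  set a := (2 : ℂ)⁻¹ • (x + adjoint x) with ha_def
  set b := ((2 : ℂ) * Complex.I)⁻¹ • (x - adjoint x) with hb_def
  set M := ‖a‖ with hM_def
  -- Step A : the sector condition for all vectors
  have hform : ∀ w : H, 0 ≤ (inner ℂ (x w) w : ℂ).re ∧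
      |(inner ℂ (x w) w : ℂ).im| ≤ t * (inner ℂ (x w) w : ℂ).re := by
    intro w
    rcases eq_or_ne w 0 with rfl | hw
    · simp
    set r : ℝ := ‖w‖⁻¹ with hr_def
    have hr : 0 < r := inv_pos.mpr (norm_pos_iff.mpr hw)
    have hu : ‖(r : ℂ) • w‖ = 1 := by
      rw [norm_smul, Complex.norm_real, Real.norm_eq_abs, abs_of_pos hr, hr_def,
        inv_mul_cancel₀ (norm_pos_iff.mpr hw).ne']
    have hz : (inner ℂ (x ((r : ℂ) • w)) ((r : ℂ) • w) : ℂ)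
        = ((r ^ 2 : ℝ) : ℂ) * (inner ℂ (x w) w : ℂ) := by
      rw [map_smul, inner_smul_left, inner_smul_right, Complex.conj_ofReal]
      push_cast
      ring
    have h := sector_aux hρ0 hρ (hsec _ hu)
    rw [hz] at h
    simp only [Complex.re_ofReal_mul, Complex.im_ofReal_mul] at h
    have hr2 : (0:ℝ) < r ^ 2 := by positivity
    constructor
    · exact nonneg_of_mul_nonneg_right h.1 hr2
    · have h2 := h.2
      rw [abs_mul, abs_of_pos hr2] at h2
      rw [show t * (r ^ 2 * (inner ℂ (x w) w : ℂ).re)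
        = r ^ 2 * (t * (inner ℂ (x w) w : ℂ).re) by ring] at h2
      exact le_of_mul_le_mul_left h2 hr2
  -- basic facts about a and b
  have ha_sa : IsSelfAdjoint a := by
    rw [ha_def, IsSelfAdjoint, star_smul, star_add, star_eq_adjoint, star_eq_adjoint,
      adjoint_adjoint]
    simp [map_ofNat, add_comm]
  have hb_sa : IsSelfAdjoint b := by
    rw [hb_def, IsSelfAdjoint, star_smul, star_sub, star_eq_adjoint, star_eq_adjoint,
      adjoint_adjoint]
    have hval : ((2:ℂ) * Complex.I)⁻¹ = -(Complex.I/2) := by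
      rw [mul_inv, Complex.inv_I]; ring
    rw [hval]
    have h1 : star (-(Complex.I/2)) = Complex.I/2 := by
      simp [Complex.star_def, map_div₀, Complex.conj_I, map_ofNat]
      ring
    rw [h1]
    module
  have hxab : x = a + Complex.I • b := by
    rw [ha_def, hb_def, smul_smul]
    have h2 : Complex.I * ((2 * Complex.I))⁻¹ = (2:ℂ)⁻¹ := by
      field_simp
    rw [h2]
    module
  have hinner_a : ∀ w : H, (inner ℂ (a w) w : ℂ) = (((inner ℂ (x w) w : ℂ).re : ℝ) : ℂ) := by
    intro w
    rw [ha_def, ContinuousLinearMap.smul_apply, inner_smul_left, ContinuousLinearMap.add_apply,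
      inner_add_left, adjoint_inner_left, ← inner_conj_symm w (x w)]
    rw [Complex.add_conj]
    simp [map_ofNat]
  have hinner_b : ∀ w : H, (inner ℂ (b w) w : ℂ) = ((-(inner ℂ (x w) w : ℂ).im : ℝ) : ℂ) := by
    intro w
    rw [hb_def, ContinuousLinearMap.smul_apply, inner_smul_left, ContinuousLinearMap.sub_apply,
      inner_sub_left, adjoint_inner_left, ← inner_conj_symm w (x w)]
    rw [Complex.sub_conj, map_inv₀]
    have h1 : (starRingEnd ℂ) (2 * Complex.I) = -(2 * Complex.I) := by
      simp [Complex.conj_I, map_ofNat]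
    rw [h1, inv_neg]
    have h2 : (2:ℂ) * Complex.I ≠ 0 := by simp [Complex.I_ne_zero]
    field_simp
    push_cast
    ring_nf
  have key := key_quadratic_bound x a b t ht0 ha_sa hb_sa hxab hinner_a hinner_b hform
  constructor
  · refine ContinuousLinearMap.isSelfAdjoint_iff_isSymmetric.mp (IsSelfAdjoint.sub (IsSelfAdjoint.smul (star_trivial _) ha_sa) ?_)
    rw [← star_eq_adjoint]
    exact IsSelfAdjoint.star_mul_self x
  · intro ξ
    rw [reApplyInnerSelf_apply, ContinuousLinearMap.sub_apply, inner_sub_left]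
    have h1 : ((M * (1 / Real.cos ρ) ^ 2) • a) ξ = ((M * (1 / Real.cos ρ) ^ 2 : ℝ) : ℂ) • a ξ := by
      rw [ContinuousLinearMap.smul_apply, Complex.coe_smul]
    have h2 : ((adjoint x * x) ξ : H) = adjoint x (x ξ) := rfl
    rw [h1, h2, inner_smul_left, Complex.conj_ofReal, hinner_a, adjoint_inner_left, hips]
    rw [show ((M * (1 / Real.cos ρ) ^ 2 : ℝ) : ℂ) * (((inner ℂ (x ξ) ξ : ℂ).re : ℝ) : ℂ)
      = (((M * (1 / Real.cos ρ) ^ 2 * (inner ℂ (x ξ) ξ : ℂ).re : ℝ)) : ℂ) by push_cast; ring]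
    rw [RCLike.re_to_complex, Complex.sub_re, Complex.ofReal_re, Complex.ofReal_re]
    have h3 := key ξ
    rw [hsec2]
    nlinarith [h3]
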